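/- Let a, b ∈ ℝⁿ, θ ∈ (0,1), c = (1−θ)a + θb, and δ ∈ (0, θ). Then b + cone(b − B(a, δ)) ⊆ c + cone(c − B(a, δ)), where b − B(a, δ) denotes the set {b − x : x ∈ B(a, δ)} and similarly for c. -/

import Mathlib

/-- for a, b ∈ ℝⁿ, θ ∈ (0,1), c = (1−θ)a + θb, δ ∈ (0,θ),
b + cone(b − B(a,δ)) ⊆ c + cone(c − B(a,δ)). -/
theorem statement_1 (n : ℕ) (hn : 1 ≤ n)
    (a b : EuclideanSpace ℝ (Fin n)) (θ : ℝ) (hθ : θ ∈ Set.Ioo (0:ℝ) 1)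
    (c : EuclideanSpace ℝ (Fin n)) (hc : c = (1 - θ) • a + θ • b)
    (δ : ℝ) (hδ : δ ∈ Set.Ioo 0 θ) :
    (fun z => b + z) '' {y | ∃ t : ℝ, 0 ≤ t ∧ ∃ x ∈ Metric.ball a δ, y = t • (b - x)} ⊆
      (fun z => c + z) '' {y | ∃ t : ℝ, 0 ≤ t ∧ ∃ x ∈ Metric.ball a δ, y = t • (c - x)} := by
  obtain ⟨hθ0, hθ1⟩ := hθ
  rintro _ ⟨_, ⟨t, ht, x, hx, rfl⟩, rfl⟩
  set s : ℝ := (1 + t) / θ - 1 with hs_def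
  have hθne : θ ≠ 0 := hθ0.ne'
  have hs : 0 < s := by
    have : 1 + t < (1 + t) / θ := by
      rw [lt_div_iff₀ hθ0]
      nlinarith
    simp only [hs_def]
    linarith
  have hts : t / s ≤ 1 := by
    rw [div_le_one hs]
    rw [hs_def, le_sub_iff_add_le, le_div_iff₀ hθ0]
    nlinarith
  have hts0 : 0 ≤ t / s := div_nonneg ht hs.le
  have hsθ : s * θ = 1 + t - θ := by
    rw [hs_def, sub_mul, div_mul_cancel₀ _ hθne, one_mul]
  have htss : t / s * s = t := div_mul_cancel₀ t hs.ne'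
  refine ⟨s • (c - (a + (t / s) • (x - a))), ⟨s, hs.le, a + (t / s) • (x - a), ?_, rfl⟩, ?_⟩
  · rw [Metric.mem_ball] at hx ⊢
    rw [dist_eq_norm] at hx ⊢
    calc ‖a + (t / s) • (x - a) - a‖ = (t / s) * ‖x - a‖ := by
          rw [add_sub_cancel_left, norm_smul, Real.norm_eq_abs, abs_of_nonneg hts0]
      _ ≤ 1 * ‖x - a‖ := by
          exact mul_le_mul_of_nonneg_right hts (norm_nonneg _)
      _ < δ := by simpa using hx
  · simp only
    subst hc
    match_scalars <;>
      first
      | linear_combination htss - hsθ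
      | linear_combination hsθ
      | linear_combination -htss
      | linear_combination htss
      | ring
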